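/- Let m ≥ 3 be an integer, let n ≥ 10 be a natural number with n ≡ 2 (mod 4), and let l be an integer with 1 ≤ l ≤ m−1. Then gcd(3·2^m, 3·2^{m−2}·(n−4) + 3·2^{m−1} − 3·2^l) = 3·2^l. -/

import Mathlib

/-- For `m ≥ 3`, `n ≥ 10` with `n ≡ 2 (mod 4)`, and `1 ≤ l ≤ m-1`:
`gcd(3·2^m, 3·2^{m-2}·(n-4) + 3·2^{m-1} - 3·2^l) = 3·2^l`. -/
theorem stmt12 (m n l : ℕ) (hm : 3 ≤ m) (hn : 10 ≤ n) (h4 : n % 4 = 2)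
    (hl1 : 1 ≤ l) (hlm : l ≤ m - 1) :
    Nat.gcd (3 * 2 ^ m) (3 * 2 ^ (m - 2) * (n - 4) + 3 * 2 ^ (m - 1) - 3 * 2 ^ l) = 3 * 2 ^ l := by
  obtain ⟨s, hs, hs1⟩ : ∃ s, n - 4 = 4 * s + 2 ∧ 1 ≤ s := ⟨n / 4 - 1, by omega, by omega⟩
  set a := m - l with ha
  have ha1 : 1 ≤ a := by omega
  have e1 : 2 ^ (m - 1) = 2 * 2 ^ (m - 2) := by
    rw [← pow_succ']; congr 1; omega
  have e2 : 2 ^ l * 2 ^ a = 4 * 2 ^ (m - 2) := by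
    rw [← pow_add, show l + a = m by omega, show (4 : ℕ) = 2 ^ 2 from rfl, ← pow_add]
    congr 1; omega
  set w := 2 ^ a * (s + 1) with hw
  have key : 3 * 2 ^ (m - 2) * (n - 4) + 3 * 2 ^ (m - 1) = 3 * 2 ^ l * w := by
    rw [hs, e1, hw, show 3 * 2 ^ l * (2 ^ a * (s + 1)) = 3 * (2 ^ l * 2 ^ a) * (s + 1) by ring,
      e2]
    ring
  have h2w : 2 ∣ w := ⟨2 ^ (a - 1) * (s + 1), by
    rw [hw, ← mul_assoc, show 2 * 2 ^ (a - 1) = 2 ^ a by rw [← pow_succ']; congr 1; omega]⟩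
  have hw1 : 1 ≤ w := by
    have : 0 < 2 ^ a := Nat.pow_pos (by norm_num)
    show 0 < w; rw [hw]; positivity
  have key2 : 3 * 2 ^ (m - 2) * (n - 4) + 3 * 2 ^ (m - 1) - 3 * 2 ^ l
      = 3 * 2 ^ l * (w - 1) := by
    rw [key, Nat.mul_sub, mul_one]
  rw [key2, show 3 * 2 ^ m = 3 * 2 ^ l * 2 ^ a by
      rw [show m = l + a by omega, pow_add]; ring,
    Nat.gcd_mul_left]
  have hcop : Nat.Coprime (2 ^ a) (w - 1) := by
    apply Nat.Coprime.pow_left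
    rw [Nat.coprime_comm, Nat.coprime_two_right, Nat.odd_iff]
    omega
  rw [hcop, mul_one]
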